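/- Let F_n denote the finite set of rationals in [0,1] obtained as the image of the dyadic set D_n = {k/2^n : 0 ≤ k ≤ 2^n} under the inverse of the Minkowski question mark function (equivalently, built inductively from F_0 = {0/1, 1/1} by inserting the mediant between each pair of adjacent elements). Then any two adjacent complementary intervals I, J of F_n (intervals between consecutive elements of F_n sharing an endpoint) satisfy 1/n ≤ |I|/|J| ≤ n for n ≥ 1. -/

import Mathlib

/-- The mediant of two rationals: `(p/q, r/s) ↦ (p+r)/(q+s)`. -/
def mediant (a b : ℚ) : ℚ :=
  ((a.num : ℚ) + (b.num : ℚ)) / ((a.den : ℚ) + (b.den : ℚ))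

/-- Insert the mediant between each pair of adjacent entries of a list. -/
def insertMediants : List ℚ → List ℚ
  | a :: b :: rest => a :: mediant a b :: insertMediants (b :: rest)
  | l => l

/-- The Farey-type partition points `F_n` of `[0,1]`: `F_0 = [0, 1]`, and
`F_{n+1}` is obtained from `F_n` by inserting the mediant between each pair of
consecutive elements. -/
def fareyList : ℕ → List ℚ
  | 0 => [0, 1]
  | n + 1 => insertMediants (fareyList n)

/-- Unimodularity relation between consecutive Farey fractions. -/
def FR (a b : ℚ) : Prop := b.num * (a.den : ℤ) - a.num * (b.den : ℤ) = 1

lemma mediant_num_den {a b : ℚ} (h : FR a b) :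
    (mediant a b).num = a.num + b.num ∧ ((mediant a b).den : ℤ) = (a.den : ℤ) + b.den := by
  have hpos : (0:ℤ) < (a.den : ℤ) + b.den := by positivity
  have hcop : IsCoprime (a.num + b.num) ((a.den : ℤ) + b.den) :=
    ⟨(a.den : ℤ), -a.num, by unfold FR at h; linarith⟩
  have hcop' : Nat.Coprime (a.num + b.num).natAbs ((a.den : ℤ) + b.den).natAbs :=
    Int.isCoprime_iff_gcd_eq_one.mp hcop
  have hme : mediant a b = (((a.num + b.num : ℤ) : ℚ)) / (((a.den : ℤ) + b.den : ℤ) : ℚ) := by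
    unfold mediant; push_cast; ring
  exact ⟨by rw [hme]; exact Rat.num_div_eq_of_coprime hpos hcop',
    by rw [hme]; exact Rat.den_div_eq_of_coprime hpos hcop'⟩

lemma mediant_den {a b : ℚ} (h : FR a b) : (mediant a b).den = a.den + b.den := by
  have := (mediant_num_den h).2; exact_mod_cast this

lemma FR_mediant_left {a b : ℚ} (h : FR a b) : FR a (mediant a b) := by
  obtain ⟨hn, hd⟩ := mediant_num_den h
  unfold FR at h ⊢; rw [hn, hd]; ring_nf; ring_nf at h; linarith

lemma FR_mediant_right {a b : ℚ} (h : FR a b) : FR (mediant a b) b := by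
  obtain ⟨hn, hd⟩ := mediant_num_den h
  unfold FR at h ⊢; rw [hn, hd]; ring_nf; ring_nf at h; linarith

lemma insert_get0 : ∀ (x : ℚ) (l : List ℚ), (insertMediants (x :: l))[0]? = some x
  | _, [] => rfl
  | _, _ :: _ => rfl

lemma insert_head? : ∀ (x : ℚ) (l : List ℚ), (insertMediants (x :: l)).head? = some x
  | _, [] => rfl
  | _, _ :: _ => rfl

lemma chain_insert : ∀ {l : List ℚ}, l.IsChain FR → (insertMediants l).IsChain FR
  | [], _ => by simp [insertMediants]
  | [a], _ => by simp [insertMediants]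
  | a :: b :: rest, h => by
    rw [List.isChain_cons_cons] at h
    obtain ⟨hab, htl⟩ := h
    have ih := chain_insert htl
    rw [insertMediants, List.isChain_cons_cons]
    refine ⟨FR_mediant_left hab, List.isChain_cons.mpr ⟨?_, ih⟩⟩
    intro y hy
    rw [insert_head?] at hy
    have hy' : b = y := by simpa using hy
    rw [← hy']
    exact FR_mediant_right hab

lemma chain_farey : ∀ n, (fareyList n).IsChain FR
  | 0 => by
    simp only [fareyList, List.isChain_cons_cons, List.isChain_singleton, and_true]
    unfold FR; norm_num
  | n + 1 => chain_insert (chain_farey n)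

/-- Denominator-comparability of adjacent pairs. -/
def PairInv (K : ℕ) (l : List ℚ) : Prop :=
  l.IsChain (fun a b => b.den ≤ K * a.den ∧ a.den ≤ K * b.den)

lemma pair_insert : ∀ {l : List ℚ} {K : ℕ}, l.IsChain FR → PairInv K l →
    PairInv (K + 1) (insertMediants l)
  | [], _, _, _ => by simp [insertMediants, PairInv]
  | [a], _, _, _ => by simp [insertMediants, PairInv]
  | a :: b :: rest, K, hc, hp => by
    rw [List.isChain_cons_cons] at hc
    rw [PairInv, List.isChain_cons_cons] at hp
    obtain ⟨hab, htc⟩ := hc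
    obtain ⟨⟨h1, h2⟩, htp⟩ := hp
    have ih := pair_insert htc htp
    have hd : (mediant a b).den = a.den + b.den := mediant_den hab
    have hb1 : 1 ≤ b.den := b.pos
    have ha1 : 1 ≤ a.den := a.pos
    rw [PairInv, insertMediants, List.isChain_cons_cons]
    constructor
    · rw [hd]
      refine ⟨?_, ?_⟩
      · calc a.den + b.den ≤ a.den + K * a.den := by omega
          _ = (K+1) * a.den := by ring
      · calc a.den ≤ 1 * (a.den + b.den) := by omega
          _ ≤ (K+1) * (a.den + b.den) := Nat.mul_le_mul_right _ (by omega)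
    · refine List.isChain_cons.mpr ⟨?_, ih⟩
      intro y hy
      rw [insert_head?] at hy
      have hy' : b = y := by simpa using hy
      rw [← hy', hd]
      refine ⟨?_, ?_⟩
      · calc b.den ≤ 1 * (a.den + b.den) := by omega
          _ ≤ (K+1) * (a.den + b.den) := Nat.mul_le_mul_right _ (by omega)
      · calc a.den + b.den ≤ K * b.den + b.den := by omega
          _ = (K+1) * b.den := by ring

lemma pair_farey : ∀ n, PairInv (n + 1) (fareyList n)
  | 0 => by
    simp only [fareyList, PairInv, List.isChain_cons_cons, List.isChain_singleton, and_true]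
    norm_num
  | n + 1 => pair_insert (chain_farey n) (pair_farey n)

lemma triple_insert : ∀ {l : List ℚ} {K : ℕ}, l.IsChain FR → PairInv K l →
    ∀ (i : ℕ) (x y z : ℚ), (insertMediants l)[i]? = some x →
      (insertMediants l)[i+1]? = some y → (insertMediants l)[i+2]? = some z →
      z.den ≤ K * x.den ∧ x.den ≤ K * z.den
  | [], _, _, _, i, x, y, z, hx, hy, hz => by simp [insertMediants] at hx
  | [a], _, _, _, i, x, y, z, hx, hy, hz => by
    simp only [insertMediants] at hy
    rcases i with _ | i <;> simp at hy
  | a :: b :: rest, K, hc, hp, i, x, y, z, hx, hy, hz => by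
    rw [List.isChain_cons_cons] at hc
    rw [PairInv, List.isChain_cons_cons] at hp
    obtain ⟨hab, htc⟩ := hc
    obtain ⟨⟨h1, h2⟩, htp⟩ := hp
    rw [insertMediants] at hx hy hz
    match i with
    | 0 =>
      have hx' : x = a := by simpa using hx.symm
      have hz0 : (insertMediants (b :: rest))[0]? = some z := by simpa using hz
      have hz' : z = b := by rw [insert_get0] at hz0; simpa using hz0.symm
      subst hx'; subst hz'
      exact ⟨h1, h2⟩
    | 1 =>
      have hx' : x = mediant a b := by simpa using hx.symm
      match rest with
      | [] => simp [insertMediants] at hz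
      | c0 :: rest' =>
        rw [insertMediants] at hz
        have hz' : z = mediant b c0 := by simpa using hz.symm
        rw [List.isChain_cons_cons] at htc htp
        obtain ⟨hbc, _⟩ := htc
        obtain ⟨⟨h3, h4⟩, _⟩ := htp
        subst hx'; subst hz'
        rw [mediant_den hab, mediant_den hbc]
        refine ⟨?_, ?_⟩
        · calc b.den + c0.den ≤ K * a.den + K * b.den := by omega
            _ = K * (a.den + b.den) := by ring
        · calc a.den + b.den ≤ K * b.den + K * c0.den := by omega
            _ = K * (b.den + c0.den) := by ring
    | (i+2) =>
      have hx' : (insertMediants (b :: rest))[i]? = some x := by simpa using hx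
      have hy' : (insertMediants (b :: rest))[i+1]? = some y := by simpa using hy
      have hz' : (insertMediants (b :: rest))[i+2]? = some z := by simpa using hz
      exact triple_insert htc htp i x y z hx' hy' hz'

lemma chain'_get?' {R : ℚ → ℚ → Prop} :
    ∀ {l : List ℚ} {i : ℕ} {a b : ℚ}, l.IsChain R →
      l[i]? = some a → l[i+1]? = some b → R a b
  | [], _, _, _, _, ha, _ => by simp at ha
  | [x], i, _, _, _, _, hb => by rcases i with _ | i <;> simp at hb
  | x :: y :: t, 0, a, b, h, ha, hb => by
    rw [List.isChain_cons_cons] at h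
    have ha' : a = x := by simpa using ha.symm
    have hb' : b = y := by simpa using hb.symm
    subst ha'; subst hb'; exact h.1
  | x :: y :: t, i+1, a, b, h, ha, hb => by
    rw [List.isChain_cons_cons] at h
    exact chain'_get?' h.2 (by simpa using ha) (by simpa using hb)

lemma FR_sub {a b : ℚ} (h : FR a b) : b - a = 1 / ((a.den : ℚ) * b.den) := by
  have hA : ((a.den : ℚ)) ≠ 0 := by positivity
  have hB : ((b.den : ℚ)) ≠ 0 := by positivity
  have h' : ((b.num : ℚ)) * a.den - a.num * b.den = 1 := by exact_mod_cast congrArg (Int.cast : ℤ → ℚ) h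
  have e1 : a * (a.den : ℚ) = a.num := by
    nth_rewrite 1 [← Rat.num_div_den a]
    exact div_mul_cancel₀ _ hA
  have e2 : b * (b.den : ℚ) = b.num := by
    nth_rewrite 1 [← Rat.num_div_den b]
    exact div_mul_cancel₀ _ hB
  rw [eq_div_iff (by positivity)]
  linear_combination (a.den : ℚ) * e2 - (b.den : ℚ) * e1 + h'

/-- Any two adjacent complementary intervals `I = (a,b)`, `J = (b,c)` of `F_n`
(with `a, b, c` consecutive elements of `F_n`) satisfy `1/n ≤ |I|/|J| ≤ n`
for `n ≥ 1`. -/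
theorem adjacent_farey_intervals_comparable (n : ℕ) (hn : 1 ≤ n)
    (i : ℕ) (a b c : ℚ)
    (ha : (fareyList n)[i]? = some a)
    (hb : (fareyList n)[i + 1]? = some b)
    (hc : (fareyList n)[i + 2]? = some c) :
    1 / (n : ℚ) ≤ (b - a) / (c - b) ∧ (b - a) / (c - b) ≤ (n : ℚ) := by
  obtain ⟨m, rfl⟩ : ∃ m, n = m + 1 := ⟨n - 1, by omega⟩
  have hchain : (fareyList (m+1)).IsChain FR := chain_farey (m+1)
  have hab : FR a b := chain'_get?' hchain ha hb
  have hbc : FR b c := chain'_get?' hchain hb hc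
  have htr : c.den ≤ (m+1) * a.den ∧ a.den ≤ (m+1) * c.den := by
    have := triple_insert (chain_farey m) (pair_farey m) i a b c
    exact this (by exact ha) (by exact hb) (by exact hc)
  have hA : (0:ℚ) < (a.den : ℚ) := by positivity
  have hB : (0:ℚ) < (b.den : ℚ) := by positivity
  have hC : (0:ℚ) < (c.den : ℚ) := by positivity
  have hba : b - a = 1 / ((a.den : ℚ) * b.den) := FR_sub hab
  have hcb : c - b = 1 / ((b.den : ℚ) * c.den) := FR_sub hbc
  have hratio : (b - a) / (c - b) = (c.den : ℚ) / (a.den : ℚ) := by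
    rw [hba, hcb]
    field_simp
  have h1 : (c.den : ℚ) ≤ (m+1) * a.den := by exact_mod_cast htr.1
  have h2 : (a.den : ℚ) ≤ (m+1) * c.den := by exact_mod_cast htr.2
  have hn' : (0:ℚ) < ((m:ℚ)+1) := by positivity
  rw [hratio]
  constructor
  · rw [div_le_div_iff₀ (by positivity) hA]
    push_cast
    nlinarith
  · rw [div_le_iff₀ hA]
    push_cast
    nlinarith
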